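/- Under the standing assumptions, suppose 𝒜 = {x_*} is a singleton. Then for every s₀ ∈ (0,1], lim_{T→∞} ∫_{ℝⁿ} |x − x_*| d(m^T(sT))(x) = 0 uniformly for s ∈ [s₀, 1]. (This integral equals the Kantorovich–Rubinstein distance d₁(m^T(sT), δ_{x_*}) to the Dirac mass at x_*; in particular m^T(sT) converges to δ_{x_*} in d₁, locally uniformly in s ∈ (0,1].) -/

import Mathlib

open MeasureTheory Set Filter Metric

noncomputable section

set_option maxHeartbeats 1000000

abbrev En (n : ℕ) : Type := EuclideanSpace ℝ (Fin n)
abbrev Pn (n : ℕ) : Type := MeasureTheory.ProbabilityMeasure (En n)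

/-- Support of a probability measure. -/
def msupp {n : ℕ} (μ : Pn n) : Set (En n) := {x | ∀ U ∈ nhds x, μ.toMeasure U ≠ 0}

/-- Action functional on the time interval `[t,T]`. -/
def action {n : ℕ} (F : En n → Pn n → ℝ) (m : ℝ → Pn n) (t T : ℝ) (y : ℝ → En n) : ℝ :=
  ∫ s in t..T, (‖deriv y s‖ ^ 2 / 2 + F (y s) (m s))

/-- Admissible curves on `[t,T]` starting at `x`. -/
def Adm {n : ℕ} (t T : ℝ) (x : En n) (y : ℝ → En n) : Prop :=
  (∃ L : NNReal, LipschitzOnWith L y (Set.Icc t T)) ∧ y t = x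

/-- `cmin F μ` is the infimum of `F (·, μ)`. -/
def cmin {n : ℕ} (F : En n → Pn n → ℝ) (μ : Pn n) : ℝ := ⨅ z : En n, F z μ

/-- A Lagrangian equilibrium of the finite-horizon mean field game. -/
def IsEquilibrium {n : ℕ} (F : En n → Pn n → ℝ) (K₀ : Set (En n)) (m₀ : Pn n) (T : ℝ)
    (m : ℝ → Pn n) (Φ : En n → ℝ → En n) : Prop :=
  ContinuousOn m (Set.Icc 0 T) ∧
  (∀ x ∈ K₀, Adm 0 T x (Φ x) ∧
    ∀ y : ℝ → En n, Adm 0 T x y → action F m 0 T (Φ x) ≤ action F m 0 T y) ∧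
  (∀ s ∈ Set.Icc (0:ℝ) T,
    (m s : Measure (En n)) = Measure.map (fun x => Φ x s) (m₀ : Measure (En n)))

open Topology

lemma ae_ne (c : ℝ) : ∀ᵐ u : ℝ ∂volume, u ≠ c := by
  rw [ae_iff]
  have : {u : ℝ | ¬ u ≠ c} = {c} := by ext u; simp
  rw [this]; exact Real.volume_singleton

lemma ae_ne_restrict {s : Set ℝ} (c : ℝ) : ∀ᵐ u ∂(volume.restrict s), u ≠ c :=
  ae_restrict_of_ae (ae_ne c)

lemma aesm_F {n : ℕ} (F : En n → Pn n → ℝ)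
    (hFx : ∀ μ : Pn n, Continuous fun x => F x μ)
    (hFm : ∀ x : En n, Continuous fun μ : Pn n => F x μ)
    {ψ : ℝ → En n} {ms : ℝ → Pn n} {s : Set ℝ} (hs : MeasurableSet s)
    (hψ : ContinuousOn ψ s) (hms : ContinuousOn ms s) :
    AEStronglyMeasurable (fun u => F (ψ u) (ms u)) (volume.restrict s) := by
  have hψae : AEMeasurable ψ (volume.restrict s) := hψ.aemeasurable hs
  set ψ' := hψae.mk ψ with hψ'def
  have hψ'meas : Measurable ψ' := hψae.measurable_mk
  set φ := fun k => SimpleFunc.approxOn (id : En n → En n) measurable_id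
    (univ : Set (En n)) 0 (mem_univ 0) k with hφdef
  have hk : ∀ k : ℕ, AEStronglyMeasurable (fun u => F (φ k (ψ' u)) (ms u))
      (volume.restrict s) := by
    intro k
    have heqfun : (fun u => F (φ k (ψ' u)) (ms u)) =
        fun u => ∑ c ∈ (φ k).range,
          (((φ k) ∘ ψ') ⁻¹' {c}).indicator (fun v => F c (ms v)) u := by
      funext u
      rw [Finset.sum_eq_single (φ k (ψ' u))]
      · rw [Set.indicator_of_mem]; rfl
      · intro c _ hne
        apply Set.indicator_of_notMem
        simp only [mem_preimage, Function.comp_apply, mem_singleton_iff]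
        exact fun h => hne (h ▸ rfl)
      · intro h; exact absurd (SimpleFunc.mem_range_self (φ k) (ψ' u)) h
    rw [heqfun]
    refine Finset.aestronglyMeasurable_fun_sum _ (fun c _ => ?_)
    exact (((hFm c).comp_continuousOn hms).aestronglyMeasurable hs).indicator
      (((φ k).measurable.comp hψ'meas) (measurableSet_singleton c))
  have hlim : ∀ u, Tendsto (fun k => F (φ k (ψ' u)) (ms u)) atTop
      (𝓝 (F (ψ' u) (ms u))) := by
    intro u
    have h1 : Tendsto (fun k => φ k (ψ' u)) atTop (𝓝 (ψ' u)) := by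
      simpa using SimpleFunc.tendsto_approxOn (measurable_id : Measurable (id : En n → En n))
        (mem_univ (0 : En n)) (by simp : (id (ψ' u) : En n) ∈ closure (univ : Set (En n)))
    exact ((hFx (ms u)).tendsto (ψ' u)).comp h1
  have h2 : AEStronglyMeasurable (fun u => F (ψ' u) (ms u)) (volume.restrict s) :=
    aestronglyMeasurable_of_tendsto_ae atTop hk (Eventually.of_forall hlim)
  exact h2.congr (by filter_upwards [hψae.ae_eq_mk] with u hu using by rw [hu])

lemma norm_deriv_le_interior {n : ℕ} {L : NNReal} {y : ℝ → En n} {T : ℝ}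
    (hy : LipschitzOnWith L y (Icc 0 T)) {u : ℝ} (hu : u ∈ Ioo (0:ℝ) T) :
    ‖deriv y u‖ ≤ L :=
  norm_deriv_le_of_lipschitzOn (Icc_mem_nhds hu.1 hu.2) hy

lemma integrand_intInt {n : ℕ} (F : En n → Pn n → ℝ) (M : ℝ)
    (hM : ∀ (x : En n) (μ : Pn n), |F x μ| ≤ M)
    (hFx : ∀ μ : Pn n, Continuous fun x => F x μ)
    (hFm : ∀ x : En n, Continuous fun μ : Pn n => F x μ)
    {T : ℝ} {mm : ℝ → Pn n} (hm : ContinuousOn mm (Icc 0 T))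
    {y : ℝ → En n} {L : NNReal} (hy : LipschitzOnWith L y (Icc 0 T))
    {a b : ℝ} (h0a : 0 ≤ a) (hab : a ≤ b) (hbT : b ≤ T) :
    IntervalIntegrable (fun u => ‖deriv y u‖ ^ 2 / 2 + F (y u) (mm u)) volume a b := by
  have hsub : Ioc a b ⊆ Icc 0 T := fun u hu => ⟨h0a.trans hu.1.le, hu.2.trans hbT⟩
  rw [intervalIntegrable_iff_integrableOn_Ioc_of_le hab]
  constructor
  · exact ((((measurable_deriv y).norm.pow_const 2).div_const 2).aestronglyMeasurable).add
      (aesm_F F hFx hFm measurableSet_Ioc (hy.continuousOn.mono hsub) (hm.mono hsub))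
  · refine HasFiniteIntegral.of_bounded (C := (L:ℝ)^2/2 + M) ?_
    filter_upwards [ae_restrict_mem measurableSet_Ioc, ae_ne_restrict b] with u hu hub
    have huIoo : u ∈ Ioo (0:ℝ) T :=
      ⟨lt_of_le_of_lt h0a hu.1, lt_of_lt_of_le (lt_of_le_of_ne hu.2 hub) hbT⟩
    have hd : ‖deriv y u‖ ≤ (L:ℝ) := norm_deriv_le_interior hy huIoo
    have hd2 : ‖deriv y u‖^2/2 ≤ (L:ℝ)^2/2 := by
      have := pow_le_pow_left₀ (norm_nonneg (deriv y u)) hd 2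
      linarith
    have hFb := abs_le.1 (hM (y u) (mm u))
    have h0 : (0:ℝ) ≤ ‖deriv y u‖^2/2 := by positivity
    rw [Real.norm_eq_abs, abs_le]
    constructor <;> nlinarith

lemma compare {n : ℕ} (F : En n → Pn n → ℝ) (M : ℝ)
    (hM : ∀ (x : En n) (μ : Pn n), |F x μ| ≤ M)
    (hFx : ∀ μ : Pn n, Continuous fun x => F x μ)
    (hFm : ∀ x : En n, Continuous fun μ : Pn n => F x μ)
    (xstar : En n)
    (hxmin : ∀ (z : En n) (μ : Pn n), F xstar μ ≤ F z μ)
    {T : ℝ} {mm : ℝ → Pn n} (hm : ContinuousOn mm (Icc 0 T))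
    {y : ℝ → En n} {χ : NNReal} (hyLip : LipschitzOnWith χ y (Icc 0 T))
    (hymin : ∀ w : ℝ → En n, Adm 0 T (y 0) w →
      action F mm 0 T y ≤ action F mm 0 T w)
    {t0 τ V : ℝ} (ht0 : 0 ≤ t0) (hτ : 0 < τ) (ht0τ : t0 + τ ≤ T)
    {vv : En n} (hvv : ‖vv‖ ≤ V)
    (hreach : y t0 + τ • vv = xstar)
    {γr a b : ℝ}
    (hγr : ∀ u ∈ Ioc a b, γr ≤ F (y u) (mm u) - F xstar (mm u))
    (hta : t0 ≤ a) (hab : a ≤ b) (hbT : b ≤ T) :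
    γr * (b - a) ≤ (V ^ 2 / 2 + 2 * M) * τ := by
  have hT0 : (0:ℝ) ≤ T := le_trans (by linarith) ht0τ
  have haT : a ≤ T := hab.trans hbT
  have h0a : 0 ≤ a := ht0.trans hta
  have h0b : 0 ≤ b := h0a.trans hab
  set σ : ℝ → ℝ := fun u => min (max u t0) (t0 + τ) - t0 with hσdef
  set w : ℝ → En n := fun u => y (min u t0) + σ u • vv with hwdef
  have hwleft : ∀ u, u ≤ t0 → w u = y u := by
    intro u hu
    simp [hwdef, hσdef, min_eq_left hu, max_eq_right hu,
      min_eq_left (by linarith : t0 ≤ t0 + τ)]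
  have hwmid : ∀ u, t0 ≤ u → u ≤ t0 + τ → w u = y t0 + (u - t0) • vv := by
    intro u h1 h2
    simp [hwdef, hσdef, min_eq_right h1, max_eq_left h1, min_eq_left h2]
  have hwright : ∀ u, t0 + τ ≤ u → w u = xstar := by
    intro u hu
    have h1 : t0 ≤ u := by linarith
    simp only [hwdef, hσdef, min_eq_right h1, max_eq_left h1, min_eq_right hu,
      add_sub_cancel_left]
    exact hreach
  -- Lipschitz property of w
  have hminLip : LipschitzWith 1 (fun u : ℝ => min u t0) := LipschitzWith.id.min_const t0
  have hmaps : MapsTo (fun u : ℝ => min u t0) (Icc 0 T) (Icc 0 T) := by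
    intro u hu
    exact ⟨le_min hu.1 ht0, (min_le_left _ _).trans hu.2⟩
  have hcomp : LipschitzOnWith (χ * 1) (fun u => y (min u t0)) (Icc 0 T) :=
    hyLip.comp hminLip.lipschitzOnWith hmaps
  have hsubc : LipschitzWith 1 (fun z : ℝ => z - t0) :=
    LipschitzWith.of_dist_le_mul (fun x y => by
      simp [Real.dist_eq, sub_sub_sub_cancel_right])
  have hσLip := hsubc.comp ((LipschitzWith.id.max_const t0).min_const (t0 + τ))
  have hsmulbase : LipschitzWith ‖vv‖₊ (fun c : ℝ => c • vv) := by
    apply LipschitzWith.of_dist_le_mul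
    intro x y
    rw [dist_eq_norm, ← sub_smul, norm_smul, Real.dist_eq]
    simp [Real.norm_eq_abs, mul_comm]
  obtain ⟨Lw, hwLip⟩ : ∃ L : NNReal, LipschitzOnWith L w (Icc 0 T) :=
    ⟨_, hcomp.add ((hsmulbase.comp hσLip).lipschitzOnWith)⟩
  have hwAdm : Adm 0 T (y 0) w := by
    refine ⟨⟨_, hwLip⟩, ?_⟩
    exact hwleft 0 ht0
  have key := hymin w hwAdm
  unfold action at key
  set fy : ℝ → ℝ := fun u => ‖deriv y u‖ ^ 2 / 2 + F (y u) (mm u) with hfydef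
  set fw : ℝ → ℝ := fun u => ‖deriv w u‖ ^ 2 / 2 + F (w u) (mm u) with hfwdef
  set c : ℝ → ℝ := fun u => F xstar (mm u) with hcdef
  have hIy : ∀ {p q : ℝ}, 0 ≤ p → p ≤ q → q ≤ T → IntervalIntegrable fy volume p q :=
    fun hp hpq hqT => integrand_intInt F M hM hFx hFm hm hyLip hp hpq hqT
  have hIw : ∀ {p q : ℝ}, 0 ≤ p → p ≤ q → q ≤ T → IntervalIntegrable fw volume p q :=
    fun hp hpq hqT => integrand_intInt F M hM hFx hFm hm hwLip hp hpq hqT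
  have hIc : ∀ {p q : ℝ}, 0 ≤ p → p ≤ q → q ≤ T → IntervalIntegrable c volume p q := by
    intro p q hp hpq hqT
    refine ContinuousOn.intervalIntegrable ?_
    rw [uIcc_of_le hpq]
    exact (hFm xstar).comp_continuousOn (hm.mono (Icc_subset_Icc hp hqT))
  -- splits
  have Sy1 : (∫ u in (0:ℝ)..t0, fy u) + (∫ u in t0..a, fy u) = ∫ u in (0:ℝ)..a, fy u :=
    intervalIntegral.integral_add_adjacent_intervals
      (hIy le_rfl ht0 (le_trans hta haT)) (hIy ht0 hta haT)
  have Sy2 : (∫ u in (0:ℝ)..a, fy u) + (∫ u in a..b, fy u) = ∫ u in (0:ℝ)..b, fy u :=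
    intervalIntegral.integral_add_adjacent_intervals
      (hIy le_rfl h0a (hab.trans hbT)) (hIy h0a hab hbT)
  have Sy3 : (∫ u in (0:ℝ)..b, fy u) + (∫ u in b..T, fy u) = ∫ u in (0:ℝ)..T, fy u :=
    intervalIntegral.integral_add_adjacent_intervals
      (hIy le_rfl h0b hbT) (hIy h0b hbT le_rfl)
  have Sw1 : (∫ u in (0:ℝ)..t0, fw u) + (∫ u in t0..(t0+τ), fw u) = ∫ u in (0:ℝ)..(t0+τ), fw u :=
    intervalIntegral.integral_add_adjacent_intervals
      (hIw le_rfl ht0 (le_trans (by linarith) ht0τ)) (hIw ht0 (by linarith) ht0τ)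
  have Sw2 : (∫ u in (0:ℝ)..(t0+τ), fw u) + (∫ u in (t0+τ)..T, fw u) = ∫ u in (0:ℝ)..T, fw u :=
    intervalIntegral.integral_add_adjacent_intervals
      (hIw le_rfl (by linarith) ht0τ) (hIw (by linarith) ht0τ le_rfl)
  have Sc1 : (∫ u in t0..a, c u) + (∫ u in a..b, c u) = ∫ u in t0..b, c u :=
    intervalIntegral.integral_add_adjacent_intervals (hIc ht0 hta haT) (hIc h0a hab hbT)
  have Sc2 : (∫ u in t0..b, c u) + (∫ u in b..T, c u) = ∫ u in t0..T, c u :=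
    intervalIntegral.integral_add_adjacent_intervals (hIc ht0 (hta.trans hab) hbT)
      (hIc h0b hbT le_rfl)
  have Sc3 : (∫ u in t0..(t0+τ), c u) + (∫ u in (t0+τ)..T, c u) = ∫ u in t0..T, c u :=
    intervalIntegral.integral_add_adjacent_intervals (hIc ht0 (by linarith) ht0τ)
      (hIc (by linarith) ht0τ le_rfl)
  -- lower bounds for y
  have lb1 : (∫ u in t0..a, c u) ≤ ∫ u in t0..a, fy u := by
    refine intervalIntegral.integral_mono_on hta (hIc ht0 hta haT) (hIy ht0 hta haT) ?_
    intro u _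
    have h1 := hxmin (y u) (mm u)
    have h2 : (0:ℝ) ≤ ‖deriv y u‖ ^ 2 / 2 := by positivity
    simp only [hfydef, hcdef]
    linarith
  have lb3 : (∫ u in b..T, c u) ≤ ∫ u in b..T, fy u := by
    refine intervalIntegral.integral_mono_on hbT (hIc h0b hbT le_rfl) (hIy h0b hbT le_rfl) ?_
    intro u _
    have h1 := hxmin (y u) (mm u)
    have h2 : (0:ℝ) ≤ ‖deriv y u‖ ^ 2 / 2 := by positivity
    simp only [hfydef, hcdef]
    linarith
  have lb2 : (∫ u in a..b, c u) + γr * (b - a) ≤ ∫ u in a..b, fy u := by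
    have hint : IntervalIntegrable (fun u => c u + γr) volume a b :=
      (hIc h0a hab hbT).add intervalIntegrable_const
    have hmono : (∫ u in a..b, (c u + γr)) ≤ ∫ u in a..b, fy u := by
      refine intervalIntegral.integral_mono_ae_restrict hab hint (hIy h0a hab hbT) ?_
      filter_upwards [ae_restrict_mem measurableSet_Icc, ae_ne_restrict a] with u hu hua
      have huIoc : u ∈ Ioc a b := ⟨lt_of_le_of_ne hu.1 (Ne.symm hua), hu.2⟩
      have h1 := hγr u huIoc
      have h2 : (0:ℝ) ≤ ‖deriv y u‖ ^ 2 / 2 := by positivity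
      simp only [hfydef, hcdef] at *
      linarith
    have heq2 : (∫ u in a..b, (c u + γr)) = (∫ u in a..b, c u) + γr * (b - a) := by
      rw [intervalIntegral.integral_add (hIc h0a hab hbT) intervalIntegrable_const,
        intervalIntegral.integral_const, smul_eq_mul]
      ring
    rw [heq2] at hmono
    linarith
  -- equality on [0, t0]
  have ub0 : (∫ u in (0:ℝ)..t0, fw u) = ∫ u in (0:ℝ)..t0, fy u := by
    refine intervalIntegral.integral_congr_ae' ?_ ?_
    · filter_upwards [ae_ne t0] with u hu huIoc
      have hu' : u < t0 := lt_of_le_of_ne huIoc.2 hu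
      have heqev : w =ᶠ[𝓝 u] y :=
        eventually_of_mem (Iio_mem_nhds hu') (fun v hv => hwleft v (le_of_lt hv))
      simp only [hfwdef, hfydef]
      rw [heqev.deriv_eq, hwleft u hu'.le]
    · filter_upwards [] with u huIoc
      exact absurd (huIoc.1.trans_le huIoc.2) (not_lt.mpr ht0)
  -- upper bound on [t0, t0+τ]
  have ub1 : (∫ u in t0..(t0+τ), fw u) ≤ (∫ u in t0..(t0+τ), c u) + (V ^ 2 / 2 + 2 * M) * τ := by
    have hint : IntervalIntegrable (fun u => c u + (V ^ 2 / 2 + 2 * M)) volume t0 (t0+τ) :=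
      (hIc ht0 (by linarith) ht0τ).add intervalIntegrable_const
    have hmono : (∫ u in t0..(t0+τ), fw u) ≤ ∫ u in t0..(t0+τ), (c u + (V ^ 2 / 2 + 2 * M)) := by
      refine intervalIntegral.integral_mono_ae_restrict (by linarith) (hIw ht0 (by linarith) ht0τ)
        hint ?_
      filter_upwards [ae_restrict_mem measurableSet_Icc, ae_ne_restrict t0,
        ae_ne_restrict (t0+τ)] with u hu h1 h2
      have hu1 : t0 < u := lt_of_le_of_ne hu.1 (Ne.symm h1)
      have hu2 : u < t0 + τ := lt_of_le_of_ne hu.2 h2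
      have heqev : w =ᶠ[𝓝 u] (fun v => y t0 + (v - t0) • vv) :=
        eventually_of_mem (Ioo_mem_nhds hu1 hu2) (fun v hv => hwmid v hv.1.le hv.2.le)
      have hd : HasDerivAt (fun v : ℝ => y t0 + (v - t0) • vv) vv u := by
        have h := HasDerivAt.const_add (y t0) (((hasDerivAt_id u).sub_const t0).smul_const vv)
        simpa using h
      have hder : deriv w u = vv := by rw [heqev.deriv_eq]; exact hd.deriv
      have hFb := abs_le.1 (hM (w u) (mm u))
      have hcb := abs_le.1 (hM xstar (mm u))
      have hnv : ‖vv‖ ^ 2 ≤ V ^ 2 := by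
        have h0 := norm_nonneg vv
        nlinarith
      simp only [hfwdef, hcdef]
      rw [hder]
      linarith
    have heq2 : (∫ u in t0..(t0+τ), (c u + (V ^ 2 / 2 + 2 * M)))
        = (∫ u in t0..(t0+τ), c u) + (V ^ 2 / 2 + 2 * M) * τ := by
      rw [intervalIntegral.integral_add (hIc ht0 (by linarith) ht0τ) intervalIntegrable_const,
        intervalIntegral.integral_const, smul_eq_mul]
      ring
    rw [heq2] at hmono
    linarith
  -- upper bound on [t0+τ, T]
  have ub2 : (∫ u in (t0+τ)..T, fw u) ≤ ∫ u in (t0+τ)..T, c u := by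
    refine intervalIntegral.integral_mono_ae_restrict ht0τ (hIw (by linarith) ht0τ le_rfl)
      (hIc (by linarith) ht0τ le_rfl) ?_
    filter_upwards [ae_restrict_mem measurableSet_Icc, ae_ne_restrict (t0+τ)] with u hu h1
    have hu1 : t0 + τ < u := lt_of_le_of_ne hu.1 (Ne.symm h1)
    have heqev : w =ᶠ[𝓝 u] (fun _ => xstar) :=
      eventually_of_mem (Ioi_mem_nhds hu1) (fun v hv => hwright v (le_of_lt hv))
    have hder : deriv w u = 0 := by rw [heqev.deriv_eq]; exact deriv_const u xstar
    simp only [hfwdef, hcdef]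
    rw [hder, hwright u hu1.le]
    simp
  linarith

/-- **Convergence to the Dirac mass when `𝒜` is a singleton.** Under the standing assumptions,
if `𝒜 = {x_*}` then `∫ |x − x_*| d(m^T(sT)) → 0` as `T → ∞`, uniformly for `s ∈ [s₀,1]`, for
every `s₀ ∈ (0,1]`; this integral is the Kantorovich–Rubinstein distance
`d₁(m^T(sT), δ_{x_*})`, so `m^T(sT) → δ_{x_*}` in `d₁`, locally uniformly in `s ∈ (0,1]`. -/
theorem convergence_to_Dirac_mass {n : ℕ} (F : En n → Pn n → ℝ)
    (M : ℝ) (hM : ∀ (x : En n) (μ : Pn n), |F x μ| ≤ M)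
    (hFx : ∀ μ : Pn n, Continuous fun x => F x μ)
    (hFm : ∀ x : En n, Continuous fun μ : Pn n => F x μ)
    (𝒜 : Set (En n)) (hA_ne : 𝒜.Nonempty) (hA_closed : IsClosed 𝒜)
    (hargmin : ∀ μ : Pn n, {z : En n | ∀ w : En n, F z μ ≤ F w μ} = 𝒜)
    (γ : ℝ → ℝ) (hγ_pos : ∀ r : ℝ, 0 < r → 0 < γ r)
    (hγ : ∀ r : ℝ, 0 < r → ∀ (z : En n) (μ : Pn n),
      r < Metric.infDist z 𝒜 → γ r ≤ F z μ - cmin F μ)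
    (K₀ : Set (En n)) (hK₀ : IsCompact K₀)
    (m₀ : Pn n) (hm₀ : msupp m₀ ⊆ K₀)
    (m : ℝ → ℝ → Pn n) (Φ : ℝ → En n → ℝ → En n)
    (heq : ∀ T : ℝ, 1 < T → IsEquilibrium F K₀ m₀ T (m T) (Φ T))
    (χ' : ℝ) (hχ' : 0 < χ')
    (hLip : ∀ T : ℝ, 1 < T → ∀ x ∈ K₀,
      LipschitzOnWith (Real.toNNReal χ') (Φ T x) (Set.Icc 0 T))
    (xstar : En n) (hsingle : 𝒜 = {xstar}) :
    ∀ s₀ ∈ Set.Ioc (0:ℝ) 1, ∀ ε : ℝ, 0 < ε → ∃ T₁ : ℝ,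
      ∀ T : ℝ, T₁ ≤ T → 1 < T → ∀ s ∈ Set.Icc s₀ 1,
        (∫ x, ‖x - xstar‖ ∂((m T (s * T)) : Measure (En n))) ≤ ε := by
  intro s₀ hs₀ ε hε
  have hMnn : (0:ℝ) ≤ M := le_trans (abs_nonneg _) (hM xstar m₀)
  have hxstarA : xstar ∈ 𝒜 := by rw [hsingle]; exact rfl
  have hxmin : ∀ (z : En n) (μ : Pn n), F xstar μ ≤ F z μ := by
    intro z μ
    have h : xstar ∈ {z : En n | ∀ w, F z μ ≤ F w μ} := by rw [hargmin μ]; exact hxstarA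
    exact h z
  have hcmin : ∀ μ : Pn n, cmin F μ = F xstar μ := by
    intro μ
    refine le_antisymm (ciInf_le ⟨-M, ?_⟩ xstar) (le_ciInf (fun z => hxmin z μ))
    rintro v ⟨z, rfl⟩
    exact (abs_le.1 (hM z μ)).1
  have hγr : ∀ r : ℝ, 0 < r → ∀ (z : En n) (μ : Pn n),
      r < dist z xstar → γ r ≤ F z μ - F xstar μ := by
    intro r hr z μ hd
    have h := hγ r hr z μ (by rwa [hsingle, Metric.infDist_singleton])
    rwa [hcmin μ] at h
  obtain ⟨D, hD⟩ : ∃ D : ℝ, ∀ x ∈ K₀, dist x xstar ≤ D := by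
    obtain ⟨R, hR⟩ := hK₀.isBounded.subset_closedBall xstar
    exact ⟨R, fun x hx => by have := hR hx; rwa [Metric.mem_closedBall] at this⟩
  set r₂ : ℝ := ε/2 with hr₂def
  have hr₂ : 0 < r₂ := by rw [hr₂def]; linarith
  have hγ₂ : 0 < γ r₂ := hγ_pos _ hr₂
  set r₁ : ℝ := min (ε/2) (ε * γ r₂ / (χ' * (1 + 4*M))) with hr₁def
  have hr₁pos : 0 < r₁ := by
    refine lt_min (by linarith) ?_
    have h1 : (0:ℝ) < χ' * (1 + 4*M) := by nlinarith
    positivity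
  have hγ₁ : 0 < γ r₁ := hγ_pos _ hr₁pos
  set C₀ : ℝ := D^2/2 + 2*M with hC₀def
  have hC₀nn : 0 ≤ C₀ := by rw [hC₀def]; positivity
  set T₀ : ℝ := C₀ / γ r₁ + 1 with hT₀def
  have hT₀pos : 0 < T₀ := by
    have : 0 ≤ C₀ / γ r₁ := div_nonneg hC₀nn hγ₁.le
    rw [hT₀def]; linarith
  refine ⟨max (T₀ / s₀) (T₀ + r₁ + 1), ?_⟩
  intro T hT₁ hT1 s hs
  have hTpos : (0:ℝ) < T := by linarith
  obtain ⟨hmcont, heqb, hmap⟩ := heq T hT1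
  set t : ℝ := s * T with htdef
  have hspos : 0 < s := lt_of_lt_of_le hs₀.1 hs.1
  have hts : s₀ * T ≤ t := mul_le_mul_of_nonneg_right hs.1 hTpos.le
  have htT : t ≤ T := by
    rw [htdef]; nlinarith [hs.2]
  have hT₀T : T₀ ≤ T := le_trans (by linarith [hr₁pos] : T₀ ≤ T₀ + r₁ + 1)
    (le_trans (le_max_right _ _) hT₁)
  have hT₀t : T₀ ≤ t := by
    have h1 : T₀ / s₀ ≤ T := le_trans (le_max_left _ _) hT₁
    have h2 : T₀ ≤ T * s₀ := (div_le_iff₀ hs₀.1).1 h1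
    calc T₀ ≤ T * s₀ := h2
      _ = s₀ * T := mul_comm _ _
      _ ≤ t := hts
  have htnn : 0 ≤ t := le_trans hT₀pos.le hT₀t
  have hTr₁ : T₀ + r₁ ≤ T := le_trans (by linarith) (le_trans (le_max_right _ _) hT₁)
  -- pointwise estimate
  have hpt : ∀ x ∈ K₀, dist (Φ T x t) xstar ≤ ε := by
    intro x hx
    obtain ⟨hyAdm, hymin⟩ := heqb x hx
    set y : ℝ → En n := Φ T x with hydef
    have hy0 : y 0 = x := hyAdm.2
    have hyLip : LipschitzOnWith (Real.toNNReal χ') y (Icc 0 T) := hLip T hT1 x hx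
    have hymin' : ∀ w : ℝ → En n, Adm 0 T (y 0) w →
        action F (m T) 0 T y ≤ action F (m T) 0 T w := by
      rw [hy0]; exact hymin
    -- Stage 1
    have hstage1 : ∃ t0 ∈ Icc (0:ℝ) T₀, dist (y t0) xstar ≤ r₁ := by
      by_contra hno
      push_neg at hno
      have hbad : ∀ u ∈ Ioc (0:ℝ) T₀, γ r₁ ≤ F (y u) (m T u) - F xstar (m T u) :=
        fun u hu => hγr r₁ hr₁pos _ _ (hno u ⟨hu.1.le, hu.2⟩)
      have hvv : ‖xstar - y 0‖ ≤ D := by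
        rw [hy0, ← dist_eq_norm, dist_comm]
        exact hD x hx
      have hreach : y 0 + (1:ℝ) • (xstar - y 0) = xstar := by
        rw [one_smul]; abel
      have hcomp := compare F M hM hFx hFm xstar hxmin hmcont hyLip hymin'
        (le_refl (0:ℝ)) one_pos (by linarith : (0:ℝ) + 1 ≤ T) hvv hreach hbad
        (le_refl (0:ℝ)) hT₀pos.le hT₀T
      have hTc : γ r₁ * T₀ = C₀ + γ r₁ := by
        rw [hT₀def, mul_add, mul_one, mul_div_cancel₀ _ (ne_of_gt hγ₁)]
      rw [sub_zero] at hcomp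
      rw [hTc] at hcomp
      nlinarith [hcomp]
    obtain ⟨t0, ht0mem, ht0dist⟩ := hstage1
    have ht0t : t0 ≤ t := ht0mem.2.trans hT₀t
    -- Stage 2
    set S : Set ℝ := Icc t0 t ∩ (fun u => dist (y u) xstar) ⁻¹' Iic r₂ with hSdef
    have hr₁r₂ : r₁ ≤ r₂ := by rw [hr₂def, hr₁def]; exact min_le_left _ _
    have ht0S : t0 ∈ S := ⟨⟨le_rfl, ht0t⟩, le_trans ht0dist hr₁r₂⟩
    have hSclosed : IsClosed S := by
      have hcont : ContinuousOn (fun u => dist (y u) xstar) (Icc t0 t) :=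
        (continuous_id.dist continuous_const).comp_continuousOn
          ((hyLip.continuousOn).mono (Icc_subset_Icc ht0mem.1 htT))
      exact hcont.preimage_isClosed_of_isClosed isClosed_Icc isClosed_Iic
    have hbddS : BddAbove S := BddAbove.mono inter_subset_left bddAbove_Icc
    set g : ℝ := sSup S with hgdef
    have hgS : g ∈ S := hSclosed.csSup_mem ⟨t0, ht0S⟩ hbddS
    have hgt : g ≤ t := csSup_le ⟨t0, ht0S⟩ (fun u hu => hu.1.2)
    have ht0g : t0 ≤ g := le_csSup hbddS ht0S
    have hbad2 : ∀ u ∈ Ioc g t, γ r₂ ≤ F (y u) (m T u) - F xstar (m T u) := by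
      intro u hu
      refine hγr r₂ hr₂ _ _ ?_
      by_contra hle
      push_neg at hle
      have huS : u ∈ S := ⟨⟨ht0g.trans hu.1.le, hu.2⟩, hle⟩
      exact absurd (le_csSup hbddS huS) (not_le.mpr hu.1)
    have hnrm : ‖xstar - y t0‖ ≤ r₁ := by
      rw [← dist_eq_norm, dist_comm]
      exact ht0dist
    have hvv2 : ‖r₁⁻¹ • (xstar - y t0)‖ ≤ (1:ℝ) := by
      rw [norm_smul, Real.norm_eq_abs, abs_inv, abs_of_pos hr₁pos,
        inv_mul_le_iff₀ hr₁pos, mul_one]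
      exact hnrm
    have hreach2 : y t0 + r₁ • (r₁⁻¹ • (xstar - y t0)) = xstar := by
      rw [smul_smul, mul_inv_cancel₀ (ne_of_gt hr₁pos), one_smul]; abel
    have hcomp2 := compare F M hM hFx hFm xstar hxmin hmcont hyLip hymin'
      ht0mem.1 hr₁pos (by linarith [ht0mem.2] : t0 + r₁ ≤ T) hvv2 hreach2 hbad2
      ht0g hgt htT
    -- hcomp2 : γ r₂ * (t - g) ≤ (1^2/2 + 2*M) * r₁
    have hyd : dist (y t) (y g) ≤ χ' * (t - g) := by
      have h1 := hyLip.dist_le_mul t ⟨htnn, htT⟩ g ⟨ht0mem.1.trans ht0g, hgt.trans htT⟩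
      rw [Real.coe_toNNReal χ' hχ'.le, Real.dist_eq, abs_of_nonneg (by linarith : (0:ℝ) ≤ t - g)]
        at h1
      exact h1
    have hr₁le : r₁ ≤ ε * γ r₂ / (χ' * (1 + 4*M)) := by rw [hr₁def]; exact min_le_right _ _
    have hposc : (0:ℝ) < χ' * (1 + 4*M) := by nlinarith
    have h1 : r₁ * (χ' * (1+4*M)) ≤ ε * γ r₂ := by
      rw [← le_div_iff₀ hposc]
      exact hr₁le
    have hfin : χ' * (t - g) ≤ ε / 2 := by
      have h2 : χ' * (γ r₂ * (t - g)) ≤ χ' * ((1^2/2 + 2*M) * r₁) :=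
        mul_le_mul_of_nonneg_left hcomp2 hχ'.le
      have h3 : χ' * ((1^2/2 + 2*M) * r₁) = (r₁ * (χ' * (1+4*M)))/2 := by ring
      have h4 : χ' * (γ r₂ * (t - g)) ≤ ε * γ r₂ / 2 := by
        rw [h3] at h2; linarith
      have h5 : (χ' * (t - g)) * γ r₂ ≤ (ε / 2) * γ r₂ := by ring_nf; ring_nf at h4; linarith
      exact le_of_mul_le_mul_right h5 hγ₂
    calc dist (y t) xstar ≤ dist (y t) (y g) + dist (y g) xstar := dist_triangle _ _ _
      _ ≤ χ' * (t - g) + r₂ := add_le_add hyd hgS.2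
      _ ≤ ε/2 + ε/2 := by rw [hr₂def] at *; exact add_le_add hfin (le_refl _)
      _ = ε := by ring
  -- measure-theoretic endgame
  have hmapt := hmap t ⟨htnn, htT⟩
  set f : En n → En n := fun x => Φ T x t with hfdef
  have hfae : AEMeasurable f (m₀ : Measure (En n)) := by
    by_contra hc
    rw [Measure.map_of_not_aemeasurable hc] at hmapt
    have h1 : ((m T t) : Measure (En n)) univ = 1 := measure_univ
    rw [hmapt] at h1
    simp at h1
  have hK₀ae : ∀ᵐ x ∂(m₀ : Measure (En n)), x ∈ K₀ := by
    have hcompl : (m₀ : Measure (En n)) ((msupp m₀)ᶜ) = 0 := by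
      refine measure_null_of_locally_null _ (fun x hx => ?_)
      have hx' : ¬ ∀ U ∈ nhds x, m₀.toMeasure U ≠ 0 := hx
      push_neg at hx'
      obtain ⟨U, hU, h0⟩ := hx'
      exact ⟨U, mem_nhdsWithin_of_mem_nhds hU, h0⟩
    have hK₀c : (m₀ : Measure (En n)) K₀ᶜ = 0 :=
      measure_mono_null (compl_subset_compl.2 hm₀) hcompl
    rw [ae_iff]
    exact hK₀c
  have hcontnorm : Continuous (fun z : En n => ‖z - xstar‖) :=
    (continuous_id.sub continuous_const).norm
  rw [hmapt, integral_map hfae hcontnorm.aestronglyMeasurable]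
  have hint : Integrable (fun x => ‖f x - xstar‖) (m₀ : Measure (En n)) := by
    constructor
    · exact (hfae.aestronglyMeasurable.sub aestronglyMeasurable_const).norm
    · refine HasFiniteIntegral.of_bounded (C := ε) ?_
      filter_upwards [hK₀ae] with x hx
      rw [Real.norm_eq_abs, abs_of_nonneg (norm_nonneg _), ← dist_eq_norm]
      exact hpt x hx
  calc (∫ x, ‖f x - xstar‖ ∂(m₀ : Measure (En n)))
      ≤ ∫ _, ε ∂(m₀ : Measure (En n)) := by
        refine integral_mono_ae hint (integrable_const ε) ?_
        filter_upwards [hK₀ae] with x hx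
        rw [← dist_eq_norm]
        exact hpt x hx
    _ = ε := by simp
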